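/- Let Γ be the Cayley graph of A∗B and Γ_A the embedded Cayley graph of A. If η ⊂ Γ_A is an M-Morse geodesic (with respect to the metric of Γ_A), then η, considered as a geodesic in Γ, is M′-Morse for a Morse gauge M′ depending only on M. -/

import Mathlib

open Set Monoid

/-- A Morse gauge. -/
abbrev MorseGauge := ℝ → ℝ → ℝ

/-- A list of letters from `S ∪ S⁻¹`. -/
def IsWordOver {G : Type*} [Group G] (S : Set G) (l : List G) : Prop :=
  ∀ x ∈ l, x ∈ S ∨ x⁻¹ ∈ S

/-- The word metric on `G` associated to the generating set `S`. -/
noncomputable def wordDist {G : Type*} [Group G] (S : Set G) (x y : G) : ℝ :=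
  sInf {r : ℝ | ∃ l : List G, IsWordOver S l ∧ l.prod = x⁻¹ * y ∧ r = l.length}

section Discrete

variable {G : Type*}

/-- A discrete `(L,e)`-quasi-geodesic with respect to the distance function `d`,
parametrised over a set of integers. -/
def IsQGOnD (d : G → G → ℝ) (L e : ℝ) (γ : ℤ → G) (s : Set ℤ) : Prop :=
  ∀ i ∈ s, ∀ j ∈ s,
    (1 / L) * |(i : ℝ) - (j : ℝ)| - e ≤ d (γ i) (γ j) ∧
      d (γ i) (γ j) ≤ L * |(i : ℝ) - (j : ℝ)| + e

/-- A discrete geodesic with respect to `d`. -/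
def IsGeodesicOnD (d : G → G → ℝ) (γ : ℤ → G) (s : Set ℤ) : Prop :=
  ∀ i ∈ s, ∀ j ∈ s, d (γ i) (γ j) = |(i : ℝ) - (j : ℝ)|

/-- The discrete analogue of continuity: consecutive points are at distance at most `1`. -/
def IsContinuousD (d : G → G → ℝ) (γ : ℤ → G) (s : Set ℤ) : Prop :=
  ∀ i, i ∈ s → i + 1 ∈ s → d (γ i) (γ (i + 1)) ≤ 1

/-- The (discrete) path `γ` on `s` is `M`-Morse w.r.t. `d`: every discrete
`(L,e)`-quasi-geodesic with endpoints on `γ` stays `M L e`-close to `γ`. -/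
def IsMorseOnD (d : G → G → ℝ) (M : MorseGauge) (γ : ℤ → G) (s : Set ℤ) : Prop :=
  ∀ L e, 1 ≤ L → 0 ≤ e → ∀ (η : ℤ → G) (a b : ℤ), a ≤ b →
    IsQGOnD d L e η (Icc a b) → η a ∈ γ '' s → η b ∈ γ '' s →
    ∀ i ∈ Icc a b, ∃ j ∈ s, d (η i) (γ j) ≤ M L e

end Discrete

variable {A B : Type*} [Group A] [Group B]

/-- A syllable viewed inside the free product `A ∗ B`. -/
def sylElem : A ⊕ B → Monoid.Coprod A B
  | Sum.inl a => Monoid.Coprod.inl a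
  | Sum.inr b => Monoid.Coprod.inr b

/-- A list of syllables is alternating. -/
def AltList (l : List (A ⊕ B)) : Prop := l.Chain' (fun x y => x.isLeft ≠ y.isLeft)

/-- A reduced representation: alternating list of nontrivial syllables. -/
def ReducedList (l : List (A ⊕ B)) : Prop :=
  AltList l ∧ ∀ x ∈ l, x ≠ Sum.inl (1 : A) ∧ x ≠ Sum.inr (1 : B)

/-- `u ∈ A ∗ B` has a reduced representation starting with a nontrivial `B`-syllable. -/
def startsWithB (u : Monoid.Coprod A B) : Prop :=
  ∃ (b : B) (l : List (A ⊕ B)),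
    ReducedList (Sum.inr b :: l) ∧ ((Sum.inr b :: l).map sylElem).prod = u

/-- `C_a`: elements whose reduced representation properly begins with the `A`-syllable `a`. -/
def Cset (a : A) : Set (Monoid.Coprod A B) :=
  {w | ∃ u, startsWithB u ∧ w = Monoid.Coprod.inl a * u}

open Classical in
/-- The projection `π : A ∗ B → A`: the identity on `A`, and the separating element
`a` with `w ∈ C_a` otherwise. -/
noncomputable def projA (w : Monoid.Coprod A B) : A :=
  if h : ∃ a : A, Monoid.Coprod.inl a = w then h.choose
  else if h' : ∃ a : A, w ∈ Cset a then h'.choose else 1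

/-- The generating set of the free product `A ∗ B` induced by `S_A` and `S_B`. -/
def fpGens (SA : Set A) (SB : Set B) : Set (Monoid.Coprod A B) :=
  (fun a : A => (Monoid.Coprod.inl a : Monoid.Coprod A B)) '' SA ∪
    (fun b : B => (Monoid.Coprod.inr b : Monoid.Coprod A B)) '' SB

/- ### new material -/

open Monoid.Coprod

theorem sylElem_inl (a : A) : (sylElem (Sum.inl a) : Monoid.Coprod A B) = Monoid.Coprod.inl a := rfl
theorem sylElem_inr (b : B) : (sylElem (Sum.inr b) : Monoid.Coprod A B) = Monoid.Coprod.inr b := rfl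

theorem reducedList_nil : ReducedList ([] : List (A ⊕ B)) := ⟨List.isChain_nil, by simp⟩

theorem ReducedList.tail' {x : A ⊕ B} {l : List (A ⊕ B)} (h : ReducedList (x :: l)) :
    ReducedList l :=
  ⟨h.1.tail, fun y hy => h.2 y (List.mem_cons_of_mem _ hy)⟩

open Classical in
noncomputable def fA (a : A) : List (A ⊕ B) → List (A ⊕ B)
  | [] => if a = 1 then [] else [Sum.inl a]
  | Sum.inl a' :: t => if a = 1 then Sum.inl a' :: t else
      if a * a' = 1 then t else Sum.inl (a * a') :: t
  | Sum.inr b :: t => if a = 1 then Sum.inr b :: t else Sum.inl a :: Sum.inr b :: t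

open Classical in
noncomputable def fB (b : B) : List (A ⊕ B) → List (A ⊕ B)
  | [] => if b = 1 then [] else [Sum.inr b]
  | Sum.inr b' :: t => if b = 1 then Sum.inr b' :: t else
      if b * b' = 1 then t else Sum.inr (b * b') :: t
  | Sum.inl a :: t => if b = 1 then Sum.inl a :: t else Sum.inr b :: Sum.inl a :: t

theorem fA_one (l : List (A ⊕ B)) : fA 1 l = l := by
  rcases l with _ | ⟨(a' | b'), t⟩ <;> simp [fA]

theorem fB_one (l : List (A ⊕ B)) : fB 1 l = l := by
  rcases l with _ | ⟨(a' | b'), t⟩ <;> simp [fB]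

set_option linter.unusedSectionVars false
open Classical

theorem red_fA {l : List (A ⊕ B)} (a : A) (h : ReducedList l) : ReducedList (fA a l) := by
  obtain ⟨hc, hm⟩ := h
  by_cases ha : a = 1
  · rw [ha, fA_one]; exact ⟨hc, hm⟩
  rcases l with _ | ⟨(a' | b'), t⟩
  · simp only [fA, if_neg ha]
    exact ⟨List.isChain_singleton _, by simp [ha]⟩
  · by_cases hcan : a * a' = 1
    · simp only [fA, if_neg ha, if_pos hcan]
      exact ⟨hc.tail, fun y hy => hm y (List.mem_cons_of_mem _ hy)⟩
    · simp only [fA, if_neg ha, if_neg hcan]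
      constructor
      · simp only [AltList, List.Chain'] at hc ⊢; rw [List.isChain_cons] at hc ⊢
        simpa using hc
      · intro x hx
        rcases List.mem_cons.mp hx with h1 | h1
        · subst h1; simp [hcan]
        · exact hm x (List.mem_cons_of_mem _ h1)
  · simp only [fA, if_neg ha]
    constructor
    · simp only [AltList, List.Chain']; rw [List.isChain_cons_cons]
      exact ⟨by simp, hc⟩
    · intro x hx
      rcases List.mem_cons.mp hx with h1 | h1
      · subst h1; simp [ha]
      · exact hm x h1

theorem red_fB {l : List (A ⊕ B)} (b : B) (h : ReducedList l) : ReducedList (fB b l) := by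
  obtain ⟨hc, hm⟩ := h
  by_cases hb : b = 1
  · rw [hb, fB_one]; exact ⟨hc, hm⟩
  rcases l with _ | ⟨(a' | b'), t⟩
  · simp only [fB, if_neg hb]
    exact ⟨List.isChain_singleton _, by simp [hb]⟩
  · simp only [fB, if_neg hb]
    constructor
    · simp only [AltList, List.Chain']; rw [List.isChain_cons_cons]
      exact ⟨by simp, hc⟩
    · intro x hx
      rcases List.mem_cons.mp hx with h1 | h1
      · subst h1; simp [hb]
      · exact hm x h1
  · by_cases hcan : b * b' = 1
    · simp only [fB, if_neg hb, if_pos hcan]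
      exact ⟨hc.tail, fun y hy => hm y (List.mem_cons_of_mem _ hy)⟩
    · simp only [fB, if_neg hb, if_neg hcan]
      constructor
      · simp only [AltList, List.Chain'] at hc ⊢; rw [List.isChain_cons] at hc ⊢
        simpa using hc
      · intro x hx
        rcases List.mem_cons.mp hx with h1 | h1
        · subst h1; simp [hcan]
        · exact hm x (List.mem_cons_of_mem _ h1)

theorem fA_mul {l : List (A ⊕ B)} (h : ReducedList l) (a a' : A) :
    fA a (fA a' l) = fA (a * a') l := by
  by_cases ha' : a' = 1
  · subst ha'; rw [fA_one, mul_one]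
  by_cases ha : a = 1
  · subst ha; rw [fA_one, one_mul]
  rcases l with _ | ⟨(c | d), t⟩
  · by_cases hc : a * a' = 1 <;>
      simp [fA, ha, ha', hc]
  · by_cases hcan : a' * c = 1
    · have hkey : a * a' * c = a := by rw [mul_assoc, hcan, mul_one]
      have hLHS : fA a' (Sum.inl c :: t) = t := by
        simp [fA, ha', hcan]
      rw [hLHS]
      rcases t with _ | ⟨(c2 | d2), t'⟩
      · show (if a = 1 then [] else [Sum.inl a]) = _
        by_cases haa : a * a' = 1
        · have hac : a = c := by
            have h1 : a = a'⁻¹ := eq_inv_of_mul_eq_one_left haa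
            have hc2 : c = a'⁻¹ := eq_inv_of_mul_eq_one_right hcan
            rw [h1, hc2]
          rw [if_neg ha]; simp only [fA]; rw [if_pos haa, hac]
        · rw [if_neg ha]; simp only [fA]; rw [if_neg haa, hkey, if_neg ha]
      · exact absurd h.1 (by simp [AltList, List.Chain', List.isChain_cons_cons])
      · show (if a = 1 then _ else Sum.inl a :: Sum.inr d2 :: t') = _
        by_cases haa : a * a' = 1
        · have hac : a = c := by
            have h1 : a = a'⁻¹ := eq_inv_of_mul_eq_one_left haa
            have hc2 : c = a'⁻¹ := eq_inv_of_mul_eq_one_right hcan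
            rw [h1, hc2]
          rw [if_neg ha]; simp only [fA]; rw [if_pos haa, hac]
        · rw [if_neg ha]; simp only [fA]; rw [if_neg haa, hkey, if_neg ha]
    · simp only [fA, if_neg ha', if_neg hcan, if_neg ha]
      rw [← mul_assoc a a' c]
      by_cases haa : a * a' = 1
      · have hc1 : c ≠ 1 := fun hh => (h.2 (Sum.inl c) (by simp)).1 (by rw [hh])
        have hkc : a * a' * c = c := by rw [haa, one_mul]
        rw [if_pos haa, hkc, if_neg hc1]
      · rw [if_neg haa]
  · simp only [fA, if_neg ha', if_neg ha]

theorem fB_mul {l : List (A ⊕ B)} (h : ReducedList l) (b b' : B) :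
    fB b (fB b' l) = fB (b * b') l := by
  by_cases hb' : b' = 1
  · subst hb'; rw [fB_one, mul_one]
  by_cases hb : b = 1
  · subst hb; rw [fB_one, one_mul]
  rcases l with _ | ⟨(d | c), t⟩
  · by_cases hc : b * b' = 1 <;>
      simp [fB, hb, hb', hc]
  · simp only [fB, if_neg hb', if_neg hb]
  · by_cases hcan : b' * c = 1
    · have hkey : b * b' * c = b := by rw [mul_assoc, hcan, mul_one]
      have hLHS : fB b' (Sum.inr c :: t) = t := by
        simp [fB, hb', hcan]
      rw [hLHS]
      rcases t with _ | ⟨(d2 | c2), t'⟩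
      · show (if b = 1 then [] else [Sum.inr b]) = _
        by_cases hbb : b * b' = 1
        · have hbc : b = c := by
            have h1 : b = b'⁻¹ := eq_inv_of_mul_eq_one_left hbb
            have hc2 : c = b'⁻¹ := eq_inv_of_mul_eq_one_right hcan
            rw [h1, hc2]
          rw [if_neg hb]; simp only [fB]; rw [if_pos hbb, hbc]
        · rw [if_neg hb]; simp only [fB]; rw [if_neg hbb, hkey, if_neg hb]
      · show (if b = 1 then _ else Sum.inr b :: Sum.inl d2 :: t') = _
        by_cases hbb : b * b' = 1
        · have hbc : b = c := by
            have h1 : b = b'⁻¹ := eq_inv_of_mul_eq_one_left hbb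
            have hc2 : c = b'⁻¹ := eq_inv_of_mul_eq_one_right hcan
            rw [h1, hc2]
          rw [if_neg hb]; simp only [fB]; rw [if_pos hbb, hbc]
        · rw [if_neg hb]; simp only [fB]; rw [if_neg hbb, hkey, if_neg hb]
      · exact absurd h.1 (by simp [AltList, List.Chain', List.isChain_cons_cons])
    · simp only [fB, if_neg hb', if_neg hcan, if_neg hb]
      rw [← mul_assoc b b' c]
      by_cases hbb : b * b' = 1
      · have hc1 : c ≠ 1 := fun hh => (h.2 (Sum.inr c) (by simp)).2 (by rw [hh])
        have hkc : b * b' * c = c := by rw [hbb, one_mul]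
        rw [if_pos hbb, hkc, if_neg hc1]
      · rw [if_neg hbb]

def RWord (A B : Type*) [Group A] [Group B] := {l : List (A ⊕ B) // ReducedList l}

noncomputable def permA (a : A) : Equiv.Perm (RWord A B) where
  toFun l := ⟨fA a l.1, red_fA a l.2⟩
  invFun l := ⟨fA a⁻¹ l.1, red_fA a⁻¹ l.2⟩
  left_inv l := Subtype.ext (by
    show fA a⁻¹ (fA a l.1) = l.1
    rw [fA_mul l.2, inv_mul_cancel, fA_one])
  right_inv l := Subtype.ext (by
    show fA a (fA a⁻¹ l.1) = l.1
    rw [fA_mul l.2, mul_inv_cancel, fA_one])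

noncomputable def permB (b : B) : Equiv.Perm (RWord A B) where
  toFun l := ⟨fB b l.1, red_fB b l.2⟩
  invFun l := ⟨fB b⁻¹ l.1, red_fB b⁻¹ l.2⟩
  left_inv l := Subtype.ext (by
    show fB b⁻¹ (fB b l.1) = l.1
    rw [fB_mul l.2, inv_mul_cancel, fB_one])
  right_inv l := Subtype.ext (by
    show fB b (fB b⁻¹ l.1) = l.1
    rw [fB_mul l.2, mul_inv_cancel, fB_one])

noncomputable def homA : A →* Equiv.Perm (RWord A B) where
  toFun := permA
  map_one' := Equiv.ext fun l => Subtype.ext (fA_one l.1)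
  map_mul' a a' := Equiv.ext fun l => Subtype.ext (fA_mul l.2 a a').symm

noncomputable def homB : B →* Equiv.Perm (RWord A B) where
  toFun := permB
  map_one' := Equiv.ext fun l => Subtype.ext (fB_one l.1)
  map_mul' b b' := Equiv.ext fun l => Subtype.ext (fB_mul l.2 b b').symm

noncomputable def actFP : Monoid.Coprod A B →* Equiv.Perm (RWord A B) :=
  Monoid.Coprod.lift homA homB

theorem act_nil :
    ∀ l : List (A ⊕ B), ReducedList l →
      (actFP ((l.map sylElem).prod) (⟨[], reducedList_nil⟩ : RWord A B)).1 = l := by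
  intro l
  induction l with
  | nil => intro _; simp; rfl
  | cons x t ih =>
    intro h
    rw [List.map_cons, List.prod_cons, map_mul]
    show ((actFP (sylElem x)) ((actFP (t.map sylElem).prod) ⟨[], reducedList_nil⟩)).1 = _
    have hv : (actFP ((t.map sylElem)).prod) (⟨[], reducedList_nil⟩ : RWord A B) =
        ⟨t, h.tail'⟩ := Subtype.ext (ih h.tail')
    rw [hv]
    cases x with
    | inl a =>
      have ha : a ≠ 1 := fun hh => (h.2 (Sum.inl a) (by simp)).1 (by rw [hh])
      have hact : actFP (sylElem (Sum.inl a : A ⊕ B)) = permA a := by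
        show actFP (Monoid.Coprod.inl a) = _
        simp [actFP, homA]
      rw [hact]
      show fA a t = Sum.inl a :: t
      rcases t with _ | ⟨(c | d), t'⟩
      · simp [fA, ha]
      · exact absurd h.1 (by simp [AltList, List.Chain', List.isChain_cons_cons])
      · simp [fA, ha]
    | inr b =>
      have hb : b ≠ 1 := fun hh => (h.2 (Sum.inr b) (by simp)).2 (by rw [hh])
      have hact : actFP (sylElem (Sum.inr b : A ⊕ B)) = permB b := by
        show actFP (Monoid.Coprod.inr b) = _
        simp [actFP, homB]
      rw [hact]
      show fB b t = Sum.inr b :: t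
      rcases t with _ | ⟨(c | d), t'⟩
      · simp [fB, hb]
      · simp [fB, hb]
      · exact absurd h.1 (by simp [AltList, List.Chain', List.isChain_cons_cons])

theorem reduced_eq {l₁ l₂ : List (A ⊕ B)} (h₁ : ReducedList l₁) (h₂ : ReducedList l₂)
    (h : (l₁.map sylElem).prod = (l₂.map sylElem).prod) : l₁ = l₂ := by
  rw [← act_nil l₁ h₁, ← act_nil l₂ h₂, h]

theorem prod_fA (a : A) (l : List (A ⊕ B)) :
    ((fA a l).map sylElem).prod = Monoid.Coprod.inl a * (l.map sylElem).prod := by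
  by_cases ha : a = 1
  · rw [ha, fA_one]; simp
  rcases l with _ | ⟨(c | d), t⟩
  · simp [fA, ha, sylElem]
  · by_cases hcan : a * c = 1
    · simp only [fA, if_neg ha, if_pos hcan, List.map_cons, List.prod_cons]
      show _ = Monoid.Coprod.inl a * (Monoid.Coprod.inl c * _)
      rw [← mul_assoc, ← map_mul, hcan, map_one, one_mul]
    · simp only [fA, if_neg ha, if_neg hcan, List.map_cons, List.prod_cons]
      show Monoid.Coprod.inl (a * c) * _ = Monoid.Coprod.inl a * (Monoid.Coprod.inl c * _)
      rw [← mul_assoc, ← map_mul]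
  · simp only [fA, if_neg ha, List.map_cons, List.prod_cons, sylElem_inl]

theorem prod_fB (b : B) (l : List (A ⊕ B)) :
    ((fB b l).map sylElem).prod = Monoid.Coprod.inr b * (l.map sylElem).prod := by
  by_cases hb : b = 1
  · rw [hb, fB_one]; simp
  rcases l with _ | ⟨(c | d), t⟩
  · simp [fB, hb, sylElem]
  · simp only [fB, if_neg hb, List.map_cons, List.prod_cons, sylElem_inr]
  · by_cases hcan : b * d = 1
    · simp only [fB, if_neg hb, if_pos hcan, List.map_cons, List.prod_cons]
      show _ = Monoid.Coprod.inr b * (Monoid.Coprod.inr d * _)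
      rw [← mul_assoc, ← map_mul, hcan, map_one, one_mul]
    · simp only [fB, if_neg hb, if_neg hcan, List.map_cons, List.prod_cons]
      show Monoid.Coprod.inr (b * d) * _ = Monoid.Coprod.inr b * (Monoid.Coprod.inr d * _)
      rw [← mul_assoc, ← map_mul]

theorem exists_reduced (w : Monoid.Coprod A B) :
    ∃ l : List (A ⊕ B), ReducedList l ∧ (l.map sylElem).prod = w := by
  induction w using Monoid.Coprod.induction_on' with
  | one => exact ⟨[], reducedList_nil, by simp⟩
  | inl_mul a x ih =>
    obtain ⟨l, hl, hp⟩ := ih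
    exact ⟨fA a l, red_fA a hl, by rw [prod_fA, hp]⟩
  | inr_mul b x ih =>
    obtain ⟨l, hl, hp⟩ := ih
    exact ⟨fB b l, red_fB b hl, by rw [prod_fB, hp]⟩

theorem red_singletonA {a : A} (ha : a ≠ 1) : ReducedList ([Sum.inl a] : List (A ⊕ B)) :=
  ⟨List.isChain_singleton _, by simp [ha]⟩

theorem red_singletonB {b : B} (hb : b ≠ 1) : ReducedList ([Sum.inr b] : List (A ⊕ B)) :=
  ⟨List.isChain_singleton _, by simp [hb]⟩

theorem startsWithB_ne_inl {u : Monoid.Coprod A B} (hu : startsWithB u) (a : A) :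
    u ≠ Monoid.Coprod.inl a := by
  obtain ⟨b, l, hred, hprod⟩ := hu
  intro h
  by_cases ha : a = 1
  · have : (Sum.inr b :: l : List (A ⊕ B)) = [] :=
      reduced_eq hred reducedList_nil (by rw [hprod, h, ha]; simp)
    simp at this
  · have : (Sum.inr b :: l : List (A ⊕ B)) = [Sum.inl a] :=
      reduced_eq hred (red_singletonA ha) (by rw [hprod, h]; simp [sylElem_inl])
    simp at this

theorem red_consA {a : A} (ha : a ≠ 1) {b : B} {l : List (A ⊕ B)}
    (h : ReducedList (Sum.inr b :: l)) : ReducedList (Sum.inl a :: Sum.inr b :: l) := by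
  constructor
  · simp only [AltList, List.Chain']; rw [List.isChain_cons_cons]
    exact ⟨by simp, h.1⟩
  · intro x hx
    rcases List.mem_cons.mp hx with h1 | h1
    · subst h1; simp [ha]
    · exact h.2 x h1

theorem Cset_unique {w : Monoid.Coprod A B} {a a' : A} (h : w ∈ Cset a) (h' : w ∈ Cset a') :
    a = a' := by
  obtain ⟨u, ⟨b, l, hred, hprod⟩, rfl⟩ := h
  obtain ⟨u', ⟨b', l', hred', hprod'⟩, heq⟩ := h'
  by_cases ha : a = 1 <;> by_cases ha' : a' = 1
  · rw [ha, ha']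
  · exfalso
    have hpp : ((Sum.inr b :: l).map sylElem).prod
        = ((Sum.inl a' :: Sum.inr b' :: l').map sylElem).prod := by
      rw [hprod]
      rw [List.map_cons, List.prod_cons, sylElem_inl, hprod']
      have : u = Monoid.Coprod.inl a' * u' := by
        have := heq
        rw [ha] at this
        simpa using this
      rw [this]
    have := reduced_eq hred (red_consA ha' hred') hpp
    simp at this
  · exfalso
    have hpp : ((Sum.inl a :: Sum.inr b :: l).map sylElem).prod
        = ((Sum.inr b' :: l').map sylElem).prod := by
      rw [List.map_cons, List.prod_cons, sylElem_inl, hprod, hprod']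
      rw [ha'] at heq
      simpa using heq
    have := reduced_eq (red_consA ha hred) hred' hpp
    simp at this
  · have hpp : ((Sum.inl a :: Sum.inr b :: l).map sylElem).prod
        = ((Sum.inl a' :: Sum.inr b' :: l').map sylElem).prod := by
      rw [List.map_cons, List.prod_cons, sylElem_inl, hprod,
        List.map_cons, List.prod_cons, sylElem_inl, hprod']
      exact heq
    have := reduced_eq (red_consA ha hred) (red_consA ha' hred') hpp
    rw [List.cons.injEq, Sum.inl.injEq] at this
    exact this.1

theorem projA_inl (a : A) : projA (Monoid.Coprod.inl a : Monoid.Coprod A B) = a := by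
  unfold projA
  have h : ∃ a' : A, (Monoid.Coprod.inl a' : Monoid.Coprod A B) = Monoid.Coprod.inl a := ⟨a, rfl⟩
  rw [dif_pos h]
  exact Monoid.Coprod.inl_injective h.choose_spec

theorem projA_Cset {w : Monoid.Coprod A B} {a : A} (hw : w ∈ Cset a) : projA w = a := by
  have h1 : ¬∃ a' : A, (Monoid.Coprod.inl a' : Monoid.Coprod A B) = w := by
    rintro ⟨a', ha'⟩
    obtain ⟨u, hu, rfl⟩ := hw
    refine startsWithB_ne_inl hu (a⁻¹ * a') ?_
    rw [map_mul, ha', ← mul_assoc, ← map_mul, inv_mul_cancel, map_one, one_mul]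
  unfold projA
  rw [dif_neg h1]
  have h2 : ∃ a'' : A, w ∈ Cset a'' := ⟨a, hw⟩
  rw [dif_pos h2]
  exact Cset_unique h2.choose_spec hw

theorem inl_or_Cset (w : Monoid.Coprod A B) :
    (∃ a : A, w = Monoid.Coprod.inl a) ∨ ∃ a : A, w ∈ Cset a := by
  obtain ⟨l, hred, hprod⟩ := exists_reduced w
  rcases l with _ | ⟨(a | b), t⟩
  · exact Or.inl ⟨1, by rw [← hprod]; simp⟩
  · rcases t with _ | ⟨(c | d), t'⟩
    · exact Or.inl ⟨a, by rw [← hprod]; simp [sylElem_inl]⟩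
    · exact absurd hred.1 (by simp [AltList, List.Chain', List.isChain_cons_cons])
    · refine Or.inr ⟨a, ((Sum.inr d :: t').map sylElem).prod, ⟨d, t', hred.tail', rfl⟩, ?_⟩
      rw [← hprod, List.map_cons, List.prod_cons, sylElem_inl]
  · exact Or.inr ⟨1, w, ⟨b, t, hred, hprod⟩, by simp⟩

noncomputable def sylInv : A ⊕ B → A ⊕ B
  | Sum.inl a => Sum.inl a⁻¹
  | Sum.inr b => Sum.inr b⁻¹

noncomputable def invList (l : List (A ⊕ B)) : List (A ⊕ B) := (l.map sylInv).reverse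

theorem sylInv_isLeft (x : A ⊕ B) : (sylInv x).isLeft = x.isLeft := by
  cases x <;> simp [sylInv]

theorem red_invList {l : List (A ⊕ B)} (h : ReducedList l) : ReducedList (invList l) := by
  constructor
  · simp only [AltList, List.Chain', invList]; rw [List.isChain_reverse, List.isChain_map]
    refine h.1.imp ?_
    intro x y hxy
    show ¬(sylInv y).isLeft = (sylInv x).isLeft
    rw [sylInv_isLeft, sylInv_isLeft]
    exact fun hh => hxy (hh.symm)
  · intro x hx
    rw [invList, List.mem_reverse, List.mem_map] at hx
    obtain ⟨y, hy, rfl⟩ := hx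
    obtain ⟨hy1, hy2⟩ := h.2 y hy
    cases y with
    | inl a =>
      refine ⟨?_, by simp [sylInv]⟩
      simp only [sylInv, ne_eq, Sum.inl.injEq]
      intro hh
      exact hy1 (by simp [inv_eq_one.mp hh])
    | inr b =>
      refine ⟨by simp [sylInv], ?_⟩
      simp only [sylInv, ne_eq, Sum.inr.injEq]
      intro hh
      exact hy2 (by simp [inv_eq_one.mp hh])

theorem sylElem_sylInv (x : A ⊕ B) :
    (sylElem (sylInv x) : Monoid.Coprod A B) = (sylElem x)⁻¹ := by
  cases x <;> simp [sylInv, sylElem_inl, sylElem_inr]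

theorem invList_cons (x : A ⊕ B) (l : List (A ⊕ B)) :
    invList (x :: l) = invList l ++ [sylInv x] := by
  simp [invList]

theorem prod_invList (l : List (A ⊕ B)) :
    ((invList l).map sylElem).prod = ((l.map sylElem).prod)⁻¹ := by
  induction l with
  | nil => simp [invList]
  | cons x t ih =>
    rw [invList_cons, List.map_append, List.prod_append, ih]
    simp [sylElem_sylInv, mul_inv_rev]

theorem getLast?_fA (a : A) {l : List (A ⊕ B)} (h : ∃ b : B, l.getLast? = some (Sum.inr b)) :
    ∃ b' : B, (fA a l).getLast? = some (Sum.inr b') := by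
  obtain ⟨b, hb⟩ := h
  by_cases ha : a = 1
  · exact ⟨b, by rw [ha, fA_one]; exact hb⟩
  rcases l with _ | ⟨(c | d), t⟩
  · simp at hb
  · rcases t with _ | ⟨y, t'⟩
    · simp at hb
    · rw [List.getLast?_cons_cons] at hb
      by_cases hcan : a * c = 1
      · refine ⟨b, ?_⟩
        simp only [fA, if_neg ha, if_pos hcan]
        exact hb
      · refine ⟨b, ?_⟩
        simp only [fA, if_neg ha, if_neg hcan]
        rw [List.getLast?_cons_cons]
        exact hb
  · refine ⟨b, ?_⟩
    simp only [fA, if_neg ha]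
    rw [List.getLast?_cons_cons]
    exact hb

theorem getLast?_fB (bb : B) {l : List (A ⊕ B)} (h : ∃ b : B, l.getLast? = some (Sum.inr b)) :
    (∃ b' : B, (fB bb l).getLast? = some (Sum.inr b')) ∨ fB bb l = [] := by
  obtain ⟨b, hb⟩ := h
  by_cases hbb : bb = 1
  · exact Or.inl ⟨b, by rw [hbb, fB_one]; exact hb⟩
  rcases l with _ | ⟨(c | d), t⟩
  · simp at hb
  · refine Or.inl ⟨b, ?_⟩
    simp only [fB, if_neg hbb]
    rw [List.getLast?_cons_cons]
    exact hb
  · rcases t with _ | ⟨y, t'⟩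
    · simp only [List.getLast?_singleton, Option.some.injEq, Sum.inr.injEq] at hb
      by_cases hcan : bb * d = 1
      · exact Or.inr (by simp only [fB, if_neg hbb, if_pos hcan])
      · refine Or.inl ⟨bb * d, ?_⟩
        simp only [fB, if_neg hbb, if_neg hcan]
        simp
    · rw [List.getLast?_cons_cons] at hb
      by_cases hcan : bb * d = 1
      · refine Or.inl ⟨b, ?_⟩
        simp only [fB, if_neg hbb, if_pos hcan]
        exact hb
      · refine Or.inl ⟨b, ?_⟩
        simp only [fB, if_neg hbb, if_neg hcan]
        rw [List.getLast?_cons_cons]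
        exact hb

theorem head?_invList {l : List (A ⊕ B)} {x : A ⊕ B} (h : l.getLast? = some x) :
    (invList l).head? = some (sylInv x) := by
  rw [invList, List.head?_reverse, List.getLast?_map, h, Option.map_some]

theorem startsWithB_of_rep {u : Monoid.Coprod A B} {m : List (A ⊕ B)} (hred : ReducedList m)
    (hne : ∃ b : B, m.getLast? = some (Sum.inr b))
    (hprod : ((m.map sylElem).prod)⁻¹ = u) : startsWithB u := by
  obtain ⟨b, hb⟩ := hne
  have hh : (invList m).head? = some (Sum.inr b⁻¹) := by
    rw [head?_invList hb]; rfl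
  rcases hm : invList m with _ | ⟨y, tl⟩
  · rw [hm] at hh; simp at hh
  · rw [hm] at hh
    simp only [List.head?_cons, Option.some.injEq] at hh
    subst hh
    refine ⟨b⁻¹, tl, ?_, ?_⟩
    · rw [← hm]; exact red_invList hred
    · rw [← hm, prod_invList, hprod]

theorem startsWithB_getLast {u : Monoid.Coprod A B} (hu : startsWithB u) :
    ∃ m : List (A ⊕ B), ReducedList m ∧ (∃ b : B, m.getLast? = some (Sum.inr b)) ∧
      ((m.map sylElem).prod)⁻¹ = u := by
  obtain ⟨b, l, hred, hprod⟩ := hu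
  refine ⟨invList (Sum.inr b :: l), red_invList hred, ⟨b⁻¹, ?_⟩, ?_⟩
  · rw [invList_cons]
    simp [sylInv]
  · rw [prod_invList, inv_inv, hprod]

theorem startsWithB_mul_inl {u : Monoid.Coprod A B} (hu : startsWithB u) (s : A) :
    startsWithB (u * Monoid.Coprod.inl s) := by
  obtain ⟨m, hred, hne, hprod⟩ := startsWithB_getLast hu
  refine startsWithB_of_rep (red_fA s⁻¹ hred) (getLast?_fA s⁻¹ hne) ?_
  rw [prod_fA, mul_inv_rev, hprod, map_inv, inv_inv]

theorem startsWithB_mul_inr {u : Monoid.Coprod A B} (hu : startsWithB u) (t : B) :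
    startsWithB (u * Monoid.Coprod.inr t) ∨ u * Monoid.Coprod.inr t = 1 := by
  obtain ⟨m, hred, hne, hprod⟩ := startsWithB_getLast hu
  rcases getLast?_fB t⁻¹ hne with h | h
  · refine Or.inl (startsWithB_of_rep (red_fB t⁻¹ hred) h ?_)
    rw [prod_fB, mul_inv_rev, hprod, map_inv, inv_inv]
  · refine Or.inr ?_
    have : ((fB t⁻¹ m).map sylElem).prod = 1 := by rw [h]; simp
    rw [prod_fB] at this
    have h2 : (Monoid.Coprod.inr t⁻¹ : Monoid.Coprod A B) * u⁻¹ = 1 := by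
      rw [← hprod, inv_inv]; exact this
    calc u * Monoid.Coprod.inr t = (Monoid.Coprod.inr t⁻¹ * u⁻¹)⁻¹ := by
          rw [mul_inv_rev, inv_inv, map_inv, inv_inv]
      _ = 1 := by rw [h2, inv_one]

theorem Cset_mul_inl {w : Monoid.Coprod A B} {a : A} (h : w ∈ Cset a) (s : A) :
    w * Monoid.Coprod.inl s ∈ Cset a := by
  obtain ⟨u, hu, rfl⟩ := h
  exact ⟨u * Monoid.Coprod.inl s, startsWithB_mul_inl hu s, (mul_assoc _ _ _)⟩

theorem Cset_mul_inr {w : Monoid.Coprod A B} {a : A} (h : w ∈ Cset a) (t : B) :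
    w * Monoid.Coprod.inr t ∈ Cset a ∨ w * Monoid.Coprod.inr t = Monoid.Coprod.inl a := by
  obtain ⟨u, hu, rfl⟩ := h
  rcases startsWithB_mul_inr hu t with h' | h'
  · exact Or.inl ⟨u * Monoid.Coprod.inr t, h', (mul_assoc _ _ _)⟩
  · exact Or.inr (by rw [mul_assoc, h', mul_one])

theorem inl_mul_inr_Cset (a : A) {t : B} (ht : t ≠ 1) :
    Monoid.Coprod.inl a * Monoid.Coprod.inr t ∈ Cset a :=
  ⟨Monoid.Coprod.inr t, ⟨t, [], red_singletonB ht, by simp [sylElem_inr]⟩, rfl⟩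

/-- The key step lemma: right multiplication by a single-letter generator either leaves
`projA` unchanged, or `w` lies in `Γ_A` and `projA` moves by the `A`-letter. -/
theorem projA_step (w g : Monoid.Coprod A B)
    (hg : (∃ s : A, g = Monoid.Coprod.inl s) ∨ (∃ t : B, g = Monoid.Coprod.inr t)) :
    projA (w * g) = projA w ∨
      ((∃ aa : A, w = Monoid.Coprod.inl aa) ∧
        ∃ s : A, g = Monoid.Coprod.inl s ∧ projA (w * g) = projA w * s) := by
  rcases hg with ⟨s, rfl⟩ | ⟨t, rfl⟩
  · rcases inl_or_Cset w with ⟨aa, rfl⟩ | ⟨a, hw⟩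
    · refine Or.inr ⟨⟨aa, rfl⟩, s, rfl, ?_⟩
      rw [← map_mul, projA_inl, projA_inl]
    · exact Or.inl (by rw [projA_Cset (Cset_mul_inl hw s), projA_Cset hw])
  · rcases inl_or_Cset w with ⟨aa, rfl⟩ | ⟨a, hw⟩
    · by_cases ht : t = 1
      · exact Or.inl (by rw [ht, map_one, mul_one])
      · exact Or.inl (by rw [projA_Cset (inl_mul_inr_Cset aa ht), projA_inl])
    · rcases Cset_mul_inr hw t with h' | h'
      · exact Or.inl (by rw [projA_Cset h', projA_Cset hw])
      · exact Or.inl (by rw [h', projA_inl, projA_Cset hw])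

section Metric

variable {G : Type*} [Group G] {S : Set G}

theorem wordDist_nonneg (S : Set G) (x y : G) : 0 ≤ wordDist S x y := by
  apply Real.sInf_nonneg
  rintro r ⟨l, -, -, rfl⟩
  positivity

theorem wordDist_le {x y : G} {l : List G} (hl : IsWordOver S l) (hp : l.prod = x⁻¹ * y) :
    wordDist S x y ≤ l.length := by
  apply csInf_le
  · exact ⟨0, by rintro r ⟨l', -, -, rfl⟩; positivity⟩
  · exact ⟨l, hl, hp, rfl⟩

/-- `S` has words representing every element. -/
def HasWords (S : Set G) : Prop := ∀ g : G, ∃ l, IsWordOver S l ∧ l.prod = g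

theorem isWordOver_inv_reverse {l : List G} (hl : IsWordOver S l) :
    IsWordOver S ((l.map (·⁻¹)).reverse) := by
  intro x hx
  rw [List.mem_reverse, List.mem_map] at hx
  obtain ⟨y, hy, rfl⟩ := hx
  rcases hl y hy with h | h
  · exact Or.inr (by simpa using h)
  · exact Or.inl h

theorem prod_inv_reverse' (l : List G) : ((l.map (·⁻¹)).reverse).prod = (l.prod)⁻¹ :=
  (List.prod_inv_reverse l).symm

theorem hasWords_of_closure (hS : Subgroup.closure S = ⊤) : HasWords S := by
  intro g
  have hg : g ∈ Subgroup.closure S := by rw [hS]; trivial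
  induction hg using Subgroup.closure_induction with
  | mem x hx => exact ⟨[x], fun y hy => by rw [List.mem_singleton] at hy; exact hy ▸ Or.inl hx,
      by simp⟩
  | one => exact ⟨[], by intro y hy; simp at hy, by simp⟩
  | mul x y _ _ ihx ihy =>
    obtain ⟨l1, h1, h2⟩ := ihx
    obtain ⟨l2, h3, h4⟩ := ihy
    refine ⟨l1 ++ l2, ?_, by rw [List.prod_append, h2, h4]⟩
    intro z hz
    rcases List.mem_append.mp hz with h | h
    · exact h1 z h
    · exact h3 z h
  | inv x _ ihx =>
    obtain ⟨l, h1, h2⟩ := ihx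
    exact ⟨(l.map (·⁻¹)).reverse, isWordOver_inv_reverse h1, by rw [prod_inv_reverse', h2]⟩

theorem wordDist_set_nonempty (hS : HasWords S) (x y : G) :
    {r : ℝ | ∃ l : List G, IsWordOver S l ∧ l.prod = x⁻¹ * y ∧ r = l.length}.Nonempty := by
  obtain ⟨l, h1, h2⟩ := hS (x⁻¹ * y)
  exact ⟨l.length, l, h1, h2, rfl⟩

theorem le_wordDist (hS : HasWords S) {x y : G} {c : ℝ}
    (h : ∀ l : List G, IsWordOver S l → l.prod = x⁻¹ * y → c ≤ l.length) :
    c ≤ wordDist S x y := by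
  apply le_csInf (wordDist_set_nonempty hS x y)
  rintro r ⟨l, h1, h2, rfl⟩
  exact h l h1 h2

theorem wordDist_exists (hS : HasWords S) (x y : G) :
    ∃ l : List G, IsWordOver S l ∧ l.prod = x⁻¹ * y ∧ wordDist S x y = l.length := by
  have hTne : {n : ℕ | ∃ l : List G, IsWordOver S l ∧ l.prod = x⁻¹ * y ∧ l.length = n}.Nonempty := by
    obtain ⟨l, h1, h2⟩ := hS (x⁻¹ * y)
    exact ⟨l.length, l, h1, h2, rfl⟩
  have hmem := Nat.sInf_mem hTne
  rw [Set.mem_setOf_eq] at hmem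
  obtain ⟨l, h1, h2, h3⟩ := hmem
  refine ⟨l, h1, h2, le_antisymm (wordDist_le h1 h2) ?_⟩
  apply le_wordDist hS
  intro l' h1' h2'
  rw [h3]
  have hmem' : l'.length ∈ {n : ℕ | ∃ l : List G, IsWordOver S l ∧ l.prod = x⁻¹ * y ∧ l.length = n} :=
    ⟨l', h1', h2', rfl⟩
  exact_mod_cast Nat.sInf_le hmem'

theorem wordDist_comm (hS : HasWords S) (x y : G) : wordDist S x y = wordDist S y x := by
  have key : ∀ u v : G, wordDist S u v ≤ wordDist S v u := by
    intro u v
    obtain ⟨l, h1, h2, h3⟩ := wordDist_exists hS v u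
    rw [h3]
    have := wordDist_le (x := u) (y := v) (isWordOver_inv_reverse h1)
      (by rw [prod_inv_reverse', h2, mul_inv_rev, inv_inv])
    simpa using this
  exact le_antisymm (key x y) (key y x)

theorem wordDist_triangle (hS : HasWords S) (x y z : G) :
    wordDist S x z ≤ wordDist S x y + wordDist S y z := by
  obtain ⟨l1, h1, h2, h3⟩ := wordDist_exists hS x y
  obtain ⟨l2, h4, h5, h6⟩ := wordDist_exists hS y z
  rw [h3, h6]
  have hword : IsWordOver S (l1 ++ l2) := by
    intro w hw
    rcases List.mem_append.mp hw with h | h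
    · exact h1 w h
    · exact h4 w h
  have hprod : (l1 ++ l2).prod = x⁻¹ * z := by
    rw [List.prod_append, h2, h5, mul_assoc, ← mul_assoc y, mul_inv_cancel, one_mul]
  have := wordDist_le (x := x) (y := z) hword hprod
  simpa using this

theorem wordDist_self (x : G) : wordDist S x x = 0 := by
  refine le_antisymm ?_ (wordDist_nonneg S x x)
  have := wordDist_le (S := S) (x := x) (y := x) (l := [])
    (by intro y hy; simp at hy) (by simp)
  simpa using this

theorem wordDist_single {x g : G} (hg : g ∈ S ∨ g⁻¹ ∈ S) : wordDist S x (x * g) ≤ 1 := by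
  have := wordDist_le (S := S) (x := x) (y := x * g) (l := [g])
    (by intro y hy; rw [List.mem_singleton] at hy; exact hy ▸ hg)
    (by simp)
  simpa using this

end Metric

section FPMetric

variable {SA : Set A} {SB : Set B}

theorem hasWord_inl' (hgA : HasWords SA) (a : A) :
    ∃ l : List (Monoid.Coprod A B), IsWordOver (fpGens SA SB) l ∧
      l.prod = Monoid.Coprod.inl a := by
  obtain ⟨l, h1, h2⟩ := hgA a
  refine ⟨l.map (fun s => (Monoid.Coprod.inl s : Monoid.Coprod A B)), ?_, ?_⟩
  · intro x hx
    rw [List.mem_map] at hx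
    obtain ⟨s, hs, rfl⟩ := hx
    rcases h1 s hs with h | h
    · exact Or.inl (Or.inl ⟨s, h, rfl⟩)
    · exact Or.inr (Or.inl ⟨s⁻¹, h, by simp⟩)
  · rw [← map_list_prod, h2]

theorem hasWord_inr' (hgB : HasWords SB) (b : B) :
    ∃ l : List (Monoid.Coprod A B), IsWordOver (fpGens SA SB) l ∧
      l.prod = Monoid.Coprod.inr b := by
  obtain ⟨l, h1, h2⟩ := hgB b
  refine ⟨l.map (fun t => (Monoid.Coprod.inr t : Monoid.Coprod A B)), ?_, ?_⟩
  · intro x hx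
    rw [List.mem_map] at hx
    obtain ⟨t, ht, rfl⟩ := hx
    rcases h1 t ht with h | h
    · exact Or.inl (Or.inr ⟨t, h, rfl⟩)
    · exact Or.inr (Or.inr ⟨t⁻¹, h, by simp⟩)
  · rw [← map_list_prod, h2]

theorem fpGens_hasWords (hgA : HasWords SA) (hgB : HasWords SB) :
    HasWords (fpGens SA SB) := by
  intro w
  induction w using Monoid.Coprod.induction_on' with
  | one => exact ⟨[], by intro y hy; simp at hy, by simp⟩
  | inl_mul a x ih =>
    obtain ⟨l, h1, h2⟩ := ih
    obtain ⟨la, h3, h4⟩ := hasWord_inl' (SB := SB) hgA a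
    refine ⟨la ++ l, ?_, by rw [List.prod_append, h2, h4]⟩
    intro y hy
    rcases List.mem_append.mp hy with h | h
    · exact h3 y h
    · exact h1 y h
  | inr_mul b x ih =>
    obtain ⟨l, h1, h2⟩ := ih
    obtain ⟨lb, h3, h4⟩ := hasWord_inr' (SA := SA) hgB b
    refine ⟨lb ++ l, ?_, by rw [List.prod_append, h2, h4]⟩
    intro y hy
    rcases List.mem_append.mp hy with h | h
    · exact h3 y h
    · exact h1 y h

theorem fpGens_letter {g : Monoid.Coprod A B}
    (hg : g ∈ fpGens SA SB ∨ g⁻¹ ∈ fpGens SA SB) :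
    (∃ s : A, g = Monoid.Coprod.inl s ∧ (s ∈ SA ∨ s⁻¹ ∈ SA)) ∨
      ∃ t : B, g = Monoid.Coprod.inr t := by
  rcases hg with (⟨s, hs, rfl⟩ | ⟨t, ht, rfl⟩) | h
  · exact Or.inl ⟨s, rfl, Or.inl hs⟩
  · exact Or.inr ⟨t, rfl⟩
  · rcases h with ⟨s, hs, hinv⟩ | ⟨t, ht, hinv⟩
    · refine Or.inl ⟨s⁻¹, ?_, Or.inr (by rwa [inv_inv])⟩
      have hinv' : (Monoid.Coprod.inl s : Monoid.Coprod A B) = g⁻¹ := hinv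
      rw [map_inv, hinv', inv_inv]
    · refine Or.inr ⟨t⁻¹, ?_⟩
      have hinv' : (Monoid.Coprod.inr t : Monoid.Coprod A B) = g⁻¹ := hinv
      rw [map_inv, hinv', inv_inv]

theorem dist_inl_le (hgA : HasWords SA) (x y : A) :
    wordDist (fpGens SA SB) (Monoid.Coprod.inl x) (Monoid.Coprod.inl y) ≤ wordDist SA x y := by
  obtain ⟨l, h1, h2, h3⟩ := wordDist_exists hgA x y
  rw [h3]
  obtain ⟨lf, h4, h5⟩ : ∃ lf : List (Monoid.Coprod A B), IsWordOver (fpGens SA SB) lf ∧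
      lf.prod = (Monoid.Coprod.inl x)⁻¹ * Monoid.Coprod.inl y ∧ lf.length = l.length := by
    refine ⟨l.map (fun s => (Monoid.Coprod.inl s : Monoid.Coprod A B)), ?_, ?_, by simp⟩
    · intro z hz
      rw [List.mem_map] at hz
      obtain ⟨s, hs, rfl⟩ := hz
      rcases h1 s hs with h | h
      · exact Or.inl (Or.inl ⟨s, h, rfl⟩)
      · exact Or.inr (Or.inl ⟨s⁻¹, h, by simp⟩)
    · rw [← map_list_prod, h2, map_mul, map_inv]
  rw [← h5.2]
  exact wordDist_le h4 h5.1

theorem projA_step_dist (hgA : HasWords SA) {g : Monoid.Coprod A B}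
    (hletter : g ∈ fpGens SA SB ∨ g⁻¹ ∈ fpGens SA SB) (w : Monoid.Coprod A B) :
    wordDist SA (projA w) (projA (w * g)) ≤ 1 := by
  rcases fpGens_letter hletter with ⟨s, rfl, hmem⟩ | ⟨t, rfl⟩
  · rcases projA_step w (Monoid.Coprod.inl s) (Or.inl ⟨s, rfl⟩) with heq |
      ⟨-, s', hgs', heqs'⟩
    · rw [heq, wordDist_self]
      exact zero_le_one
    · have hss : s = s' := Monoid.Coprod.inl_injective hgs'
      rw [heqs', ← hss]
      exact wordDist_single hmem
  · rcases projA_step w (Monoid.Coprod.inr t) (Or.inr ⟨t, rfl⟩) with heq |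
      ⟨-, s', hgs', heqs'⟩
    · rw [heq, wordDist_self]
      exact zero_le_one
    · have hs1 : s' = 1 := by
        have := congrArg Monoid.Coprod.fst hgs'
        simpa using this.symm
      rw [heqs', hs1, mul_one, wordDist_self]
      exact zero_le_one

theorem projA_lipschitz_word (hgA : HasWords SA) :
    ∀ l : List (Monoid.Coprod A B), IsWordOver (fpGens SA SB) l →
      ∀ x : Monoid.Coprod A B, wordDist SA (projA x) (projA (x * l.prod)) ≤ l.length := by
  intro l
  induction l with
  | nil => intro _ x; simp [wordDist_self]
  | cons g t ih =>
    intro hl x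
    have h1 : wordDist SA (projA x) (projA (x * g)) ≤ 1 :=
      projA_step_dist hgA (hl g (by simp)) x
    have h2 : wordDist SA (projA (x * g)) (projA ((x * g) * t.prod)) ≤ t.length :=
      ih (fun y hy => hl y (List.mem_cons_of_mem _ hy)) (x * g)
    have h3 := wordDist_triangle hgA (projA x) (projA (x * g)) (projA ((x * g) * t.prod))
    rw [List.prod_cons, ← mul_assoc]
    calc wordDist SA (projA x) (projA ((x * g) * t.prod))
        ≤ _ + _ := h3
      _ ≤ 1 + t.length := add_le_add h1 h2
      _ = ((g :: t).length : ℝ) := by simp [add_comm]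

theorem projA_lipschitz (hgA : HasWords SA) (hgB : HasWords SB) (x y : Monoid.Coprod A B) :
    wordDist SA (projA x) (projA y) ≤ wordDist (fpGens SA SB) x y := by
  apply le_wordDist (fpGens_hasWords hgA hgB)
  intro l hl hp
  have := projA_lipschitz_word hgA l hl x
  rwa [hp, ← mul_assoc, mul_inv_cancel, one_mul] at this

theorem dist_inl_eq (hgA : HasWords SA) (hgB : HasWords SB) (x y : A) :
    wordDist (fpGens SA SB) (Monoid.Coprod.inl x) (Monoid.Coprod.inl y) = wordDist SA x y := by
  refine le_antisymm (dist_inl_le hgA x y) ?_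
  have := projA_lipschitz hgA hgB (Monoid.Coprod.inl x : Monoid.Coprod A B)
    (Monoid.Coprod.inl y)
  rwa [projA_inl, projA_inl] at this

/-- The depth of `x`: its distance to the gate `inl (projA x)`. -/
noncomputable def depth (SA : Set A) (SB : Set B) (x : Monoid.Coprod A B) : ℝ :=
  wordDist (fpGens SA SB) x (Monoid.Coprod.inl (projA x))

theorem depth_nonneg (x : Monoid.Coprod A B) : 0 ≤ depth SA SB x :=
  wordDist_nonneg _ _ _

theorem depth_inl (a : A) : depth SA SB (Monoid.Coprod.inl a) = 0 := by
  rw [depth, projA_inl, wordDist_self]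

theorem depth_step (hgA : HasWords SA) (hgB : HasWords SB) {g : Monoid.Coprod A B}
    (hletter : g ∈ fpGens SA SB ∨ g⁻¹ ∈ fpGens SA SB) (w : Monoid.Coprod A B) :
    depth SA SB (w * g) ≤ depth SA SB w + 1 := by
  have hgFP := fpGens_hasWords hgA hgB
  have hstep : wordDist (fpGens SA SB) (w * g) w ≤ 1 := by
    have := wordDist_single (S := fpGens SA SB) (x := w * g) (g := g⁻¹)
      (by rcases hletter with h | h; exacts [Or.inr (by rwa [inv_inv]), Or.inl h])
    rwa [mul_assoc, mul_inv_cancel, mul_one] at this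
  rcases fpGens_letter hletter with ⟨s, rfl, hmem⟩ | ⟨t, rfl⟩
  · rcases projA_step w (Monoid.Coprod.inl s) (Or.inl ⟨s, rfl⟩) with heq |
      ⟨⟨aa, rfl⟩, s', hgs', heqs'⟩
    · rw [depth, heq]
      calc wordDist (fpGens SA SB) (w * Monoid.Coprod.inl s) (Monoid.Coprod.inl (projA w))
          ≤ wordDist (fpGens SA SB) (w * Monoid.Coprod.inl s) w +
            wordDist (fpGens SA SB) w (Monoid.Coprod.inl (projA w)) :=
            wordDist_triangle hgFP _ _ _
        _ ≤ depth SA SB w + 1 := by rw [depth, add_comm _ 1]; exact add_le_add hstep le_rfl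
    · rw [show Monoid.Coprod.inl aa * Monoid.Coprod.inl s =
        (Monoid.Coprod.inl (aa * s) : Monoid.Coprod A B) from by rw [map_mul], depth_inl]
      have := depth_nonneg (SA := SA) (SB := SB) (Monoid.Coprod.inl aa : Monoid.Coprod A B)
      linarith
  · have heq : projA (w * Monoid.Coprod.inr t) = projA w := by
      rcases projA_step w (Monoid.Coprod.inr t) (Or.inr ⟨t, rfl⟩) with heq |
        ⟨-, s', hgs', heqs'⟩
      · exact heq
      · have hs1 : s' = 1 := by
          have := congrArg Monoid.Coprod.fst hgs'
          simpa using this.symm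
        rw [heqs', hs1, mul_one]
    rw [depth, heq]
    calc wordDist (fpGens SA SB) (w * Monoid.Coprod.inr t) (Monoid.Coprod.inl (projA w))
        ≤ wordDist (fpGens SA SB) (w * Monoid.Coprod.inr t) w +
          wordDist (fpGens SA SB) w (Monoid.Coprod.inl (projA w)) :=
          wordDist_triangle hgFP _ _ _
      _ ≤ depth SA SB w + 1 := by rw [depth, add_comm _ 1]; exact add_le_add hstep le_rfl

theorem depth_word (hgA : HasWords SA) (hgB : HasWords SB) :
    ∀ l : List (Monoid.Coprod A B), IsWordOver (fpGens SA SB) l →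
      ∀ w : Monoid.Coprod A B, depth SA SB (w * l.prod) ≤ depth SA SB w + l.length := by
  intro l
  induction l with
  | nil => intro _ w; simp
  | cons g t ih =>
    intro hl w
    have h1 : depth SA SB (w * g) ≤ depth SA SB w + 1 :=
      depth_step hgA hgB (hl g (by simp)) w
    have h2 := ih (fun y hy => hl y (List.mem_cons_of_mem _ hy)) (w * g)
    rw [List.prod_cons, ← mul_assoc]
    calc depth SA SB ((w * g) * t.prod) ≤ depth SA SB (w * g) + t.length := h2
      _ ≤ depth SA SB w + 1 + t.length := by linarith
      _ = depth SA SB w + ((g :: t).length : ℝ) := by push_cast [List.length_cons]; ring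

theorem depth_le_gate (hgA : HasWords SA) (hgB : HasWords SB) (x : Monoid.Coprod A B)
    (c : A) : depth SA SB x ≤ wordDist (fpGens SA SB) (Monoid.Coprod.inl c) x := by
  apply le_wordDist (fpGens_hasWords hgA hgB)
  intro l hl hp
  have := depth_word hgA hgB l hl (Monoid.Coprod.inl c)
  rw [hp, ← mul_assoc, mul_inv_cancel, one_mul, depth_inl, zero_add] at this
  exact this

theorem depth_lipschitz (hgA : HasWords SA) (hgB : HasWords SB) (x y : Monoid.Coprod A B) :
    depth SA SB x ≤ depth SA SB y + wordDist (fpGens SA SB) y x := by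
  have hgFP := fpGens_hasWords hgA hgB
  calc depth SA SB x ≤ wordDist (fpGens SA SB) (Monoid.Coprod.inl (projA y)) x :=
        depth_le_gate hgA hgB x (projA y)
    _ ≤ wordDist (fpGens SA SB) (Monoid.Coprod.inl (projA y)) y +
        wordDist (fpGens SA SB) y x := wordDist_triangle hgFP _ _ _
    _ = depth SA SB y + wordDist (fpGens SA SB) y x := by
        rw [depth, wordDist_comm hgFP]

theorem sep_word (hgA : HasWords SA) (hgB : HasWords SB) :
    ∀ l : List (Monoid.Coprod A B), IsWordOver (fpGens SA SB) l →
      ∀ x : Monoid.Coprod A B, projA x ≠ projA (x * l.prod) →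
        depth SA SB x + depth SA SB (x * l.prod) ≤ l.length := by
  have hgFP := fpGens_hasWords hgA hgB
  intro l
  induction l with
  | nil =>
    intro _ x hne
    exact absurd (show projA (x * List.prod []) = projA x by rw [List.prod_nil, mul_one])
      (Ne.symm hne)
  | cons g t ih =>
    intro hl x hne
    rw [List.prod_cons, ← mul_assoc] at hne ⊢
    by_cases hch : projA (x * g) = projA x
    · have hne' : projA (x * g) ≠ projA ((x * g) * t.prod) := by rw [hch]; exact hne
      have ihh := ih (fun y hy => hl y (List.mem_cons_of_mem _ hy)) (x * g) hne'
      have hstep : wordDist (fpGens SA SB) (x * g) x ≤ 1 := by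
        have := wordDist_single (S := fpGens SA SB) (x := x * g) (g := g⁻¹)
          (by rcases hl g (by simp) with h | h; exacts [Or.inr (by rwa [inv_inv]), Or.inl h])
        rwa [mul_assoc, mul_inv_cancel, mul_one] at this
      have hx : depth SA SB x ≤ depth SA SB (x * g) + 1 :=
        le_trans (depth_lipschitz hgA hgB x (x * g)) (by linarith)
      calc depth SA SB x + depth SA SB ((x * g) * t.prod)
          ≤ depth SA SB (x * g) + 1 + depth SA SB ((x * g) * t.prod) := by linarith
        _ ≤ 1 + t.length := by linarith
        _ = ((g :: t).length : ℝ) := by push_cast [List.length_cons]; ring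
    · obtain ⟨aa, hx⟩ : ∃ aa : A, x = Monoid.Coprod.inl aa := by
        rcases projA_step x g (by
          rcases fpGens_letter (hl g (by simp)) with ⟨s, rfl, -⟩ | ⟨t', rfl⟩
          · exact Or.inl ⟨s, rfl⟩
          · exact Or.inr ⟨t', rfl⟩) with heq | ⟨haa, -⟩
        · exact absurd heq hch
        · exact haa
      subst hx
      rw [depth_inl, zero_add]
      have hword : IsWordOver (fpGens SA SB) (g :: t) := hl
      have hle : wordDist (fpGens SA SB) (Monoid.Coprod.inl aa)
          ((Monoid.Coprod.inl aa * g) * t.prod) ≤ ((g :: t).length : ℝ) := by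
        apply wordDist_le hword
        rw [List.prod_cons, mul_assoc, ← mul_assoc ((Monoid.Coprod.inl aa : Monoid.Coprod A B))⁻¹,
          inv_mul_cancel, one_mul]
      calc depth SA SB ((Monoid.Coprod.inl aa * g) * t.prod)
          ≤ wordDist (fpGens SA SB) (Monoid.Coprod.inl aa)
            ((Monoid.Coprod.inl aa * g) * t.prod) := depth_le_gate hgA hgB _ aa
        _ ≤ ((g :: t).length : ℝ) := hle

theorem depth_sep (hgA : HasWords SA) (hgB : HasWords SB) {x y : Monoid.Coprod A B}
    (h : projA x ≠ projA y) :
    depth SA SB x + depth SA SB y ≤ wordDist (fpGens SA SB) x y := by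
  apply le_wordDist (fpGens_hasWords hgA hgB)
  intro l hl hp
  have hxy : x * l.prod = y := by rw [hp, ← mul_assoc, mul_inv_cancel, one_mul]
  have := sep_word hgA hgB l hl x (by rw [hxy]; exact h)
  rwa [hxy] at this

theorem dist_le_through_gates (hgA : HasWords SA) (hgB : HasWords SB)
    (x y : Monoid.Coprod A B) :
    wordDist (fpGens SA SB) x y ≤
      depth SA SB x + wordDist SA (projA x) (projA y) + depth SA SB y := by
  have hgFP := fpGens_hasWords hgA hgB
  calc wordDist (fpGens SA SB) x y
      ≤ wordDist (fpGens SA SB) x (Monoid.Coprod.inl (projA x)) +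
        wordDist (fpGens SA SB) (Monoid.Coprod.inl (projA x)) y := wordDist_triangle hgFP _ _ _
    _ ≤ wordDist (fpGens SA SB) x (Monoid.Coprod.inl (projA x)) +
        (wordDist (fpGens SA SB) (Monoid.Coprod.inl (projA x)) (Monoid.Coprod.inl (projA y)) +
          wordDist (fpGens SA SB) (Monoid.Coprod.inl (projA y)) y) := by
          have := wordDist_triangle hgFP (Monoid.Coprod.inl (projA x) : Monoid.Coprod A B)
            (Monoid.Coprod.inl (projA y)) y
          linarith
    _ ≤ depth SA SB x + wordDist SA (projA x) (projA y) + depth SA SB y := by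
        have h1 := dist_inl_le (SB := SB) hgA (projA x) (projA y)
        have h2 : wordDist (fpGens SA SB) (Monoid.Coprod.inl (projA y)) y = depth SA SB y := by
          rw [depth, wordDist_comm hgFP]
        rw [depth, h2]
        linarith

end FPMetric

/-- The depth bound gauge. -/
noncomputable def Dg (L e : ℝ) : ℝ := (L + e) / 2 + L * (L * (3 * L + 4 * e)) + e

/-- if `η ⊆ Γ_A` is an `M`-Morse geodesic with respect to the metric of
`Γ_A`, then `η`, considered as a geodesic in the Cayley graph `Γ` of `A ∗ B`, is
`M'`-Morse for a Morse gauge `M'` depending only on `M`. -/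
theorem stmt8 (M : MorseGauge) :
    ∃ M' : MorseGauge,
      ∀ (A B : Type) (_ : Group A) (_ : Group B) (SA : Set A) (SB : Set B),
        SA.Finite → SB.Finite →
        Subgroup.closure SA = ⊤ → Subgroup.closure SB = ⊤ →
        ∀ (η : ℤ → A) (s : Set ℤ), s.OrdConnected →
          IsGeodesicOnD (wordDist SA) η s →
          IsMorseOnD (wordDist SA) M η s →
          IsMorseOnD (wordDist (fpGens SA SB)) M'
            (fun i => (Monoid.Coprod.inl (η i) : Monoid.Coprod A B)) s := by
  classical
  refine ⟨fun L e => Dg L e + M L (e + 2 * Dg L e), ?_⟩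
  intro A B _ _ SA SB _ _ hclA hclB η s _ hgeo hMorse
  intro L e hL he η' a b hab hQG hend_a hend_b i₀ hi₀
  have hgA : HasWords SA := hasWords_of_closure hclA
  have hgB : HasWords SB := hasWords_of_closure hclB
  have hgFP : HasWords (fpGens SA SB) := fpGens_hasWords hgA hgB
  have hL0 : (0 : ℝ) < L := lt_of_lt_of_le one_pos hL
  have hD0 : 0 ≤ Dg L e := by
    have h1 : (0:ℝ) ≤ (L + e) / 2 := by linarith
    have h2 : (0:ℝ) ≤ L * (3 * L + 4 * e) := by nlinarith
    have h3 : (0:ℝ) ≤ L * (L * (3 * L + 4 * e)) := by nlinarith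
    rw [Dg]; linarith
  set c : ℤ → A := fun j => projA (η' j) with hc
  set dep : ℤ → ℝ := fun j => depth SA SB (η' j) with hdep
  obtain ⟨a₀, ha₀s, ha₀⟩ := hend_a
  obtain ⟨b₀, hb₀s, hb₀⟩ := hend_b
  have hca : c a = η a₀ := by rw [hc]; simp only; rw [← ha₀, projA_inl]
  have hcb : c b = η b₀ := by rw [hc]; simp only; rw [← hb₀, projA_inl]
  have hdepa : dep a = 0 := by rw [hdep]; simp only; rw [← ha₀, depth_inl]
  have hdepb : dep b = 0 := by rw [hdep]; simp only; rw [← hb₀, depth_inl]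
  set θ : ℝ := (L + e) / 2 with hθ
  have hθ0 : 0 ≤ θ := by rw [hθ]; linarith
  -- Step 1: every point of the quasi-geodesic has depth at most `Dg L e`.
  have hdep_bound : ∀ i ∈ Icc a b, dep i ≤ Dg L e := by
    intro i hi
    rw [mem_Icc] at hi
    by_cases hsmall : dep i ≤ θ
    · have h2 : (0:ℝ) ≤ 3 * L + 4 * e := by linarith
      have h3 : (0:ℝ) ≤ L * (3 * L + 4 * e) := mul_nonneg (by linarith) h2
      have h4 : (0:ℝ) ≤ L * (L * (3 * L + 4 * e)) := mul_nonneg (by linarith) h3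
      rw [Dg]; rw [hθ] at hsmall; linarith
    push_neg at hsmall
    obtain ⟨jm, ⟨hjm1, hjm2, hjm3⟩, hjmax⟩ :=
      Int.exists_greatest_of_bdd (P := fun j => a ≤ j ∧ j ≤ i ∧ dep j ≤ θ)
        ⟨i, fun z hz => hz.2.1⟩ ⟨a, le_refl a, hi.1, by rw [hdepa]; exact hθ0⟩
    obtain ⟨jp, ⟨hjp1, hjp2, hjp3⟩, hjmin⟩ :=
      Int.exists_least_of_bdd (P := fun j => i ≤ j ∧ j ≤ b ∧ dep j ≤ θ)
        ⟨i, fun z hz => hz.1⟩ ⟨b, hi.2, le_refl b, by rw [hdepb]; exact hθ0⟩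
    have hjmi : jm < i := lt_of_le_of_ne hjm2 (fun h => by rw [h] at hjm3; linarith)
    have hijp : i < jp := lt_of_le_of_ne hjp1 (fun h => by rw [← h] at hjp3; linarith)
    have hmid : ∀ j, jm < j → j < jp → θ < dep j := by
      intro j h1 h2
      by_contra hle
      push_neg at hle
      rcases le_or_gt j i with hji | hij
      · exact absurd (hjmax j ⟨by linarith, hji, hle⟩) (by linarith)
      · exact absurd (hjmin j ⟨le_of_lt hij, by linarith, hle⟩) (by linarith)
    have hIcc : ∀ j : ℤ, jm ≤ j → j ≤ jp → j ∈ Icc a b := by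
      intro j h1 h2
      rw [mem_Icc]
      constructor
      · linarith
      · linarith
    have hconsec : ∀ j, jm < j → j + 1 < jp → c j = c (j + 1) := by
      intro j h1 h2
      by_contra hne
      have hsep := depth_sep hgA hgB (x := η' j) (y := η' (j + 1)) hne
      have hup := (hQG j (hIcc j (by linarith) (by linarith))
        (j + 1) (hIcc (j + 1) (by linarith) (by linarith))).2
      have habs : |(j : ℝ) - ((j + 1 : ℤ) : ℝ)| = 1 := by
        push_cast
        rw [show (j : ℝ) - (j + 1) = -1 by ring, abs_neg, abs_one]
      rw [habs, mul_one] at hup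
      have d1 := hmid j h1 (by linarith)
      have d2 := hmid (j + 1) (by linarith) h2
      rw [hdep] at d1 d2
      rw [hθ] at d1 d2
      linarith
    have hconst : ∀ p, jm < p → p < jp → ∀ q, p ≤ q → q < jp → c p = c q := by
      intro p hp1 hp2
      have key := Int.le_induction (m := p) (motive := fun q _ => q < jp → c p = c q)
        (fun _ => rfl)
        (fun n hmn ih hlt => (ih (by linarith)).trans (hconsec n (by linarith) hlt))
      exact fun q hq1 hq2 => key q hq1 hq2
    have hjmjp : (jp : ℝ) - (jm : ℝ) ≤ L * (3 * L + 4 * e) := by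
      have habs1 : |((jm : ℝ)) - ((jm + 1 : ℤ) : ℝ)| = 1 := by
        push_cast
        rw [show (jm : ℝ) - (jm + 1) = -1 by ring, abs_neg, abs_one]
      have habs2 : |(((jp - 1 : ℤ)) : ℝ) - ((jp : ℤ) : ℝ)| = 1 := by
        push_cast
        rw [show (jp : ℝ) - 1 - jp = -1 by ring, abs_neg, abs_one]
      have h1 : wordDist SA (c jm) (c (jm + 1)) ≤ L + e := by
        have hlip := projA_lipschitz hgA hgB (η' jm) (η' (jm + 1))
        have hq := (hQG jm (hIcc jm le_rfl (by linarith))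
          (jm + 1) (hIcc (jm + 1) (by linarith) (by linarith))).2
        rw [habs1, mul_one] at hq
        exact le_trans hlip hq
      have h2 : wordDist SA (c (jp - 1)) (c jp) ≤ L + e := by
        have hlip := projA_lipschitz hgA hgB (η' (jp - 1)) (η' jp)
        have hq := (hQG (jp - 1) (hIcc (jp - 1) (by linarith) (by linarith))
          jp (hIcc jp (by linarith) le_rfl)).2
        rw [habs2, mul_one] at hq
        exact le_trans hlip hq
      have hmidc : c (jm + 1) = c (jp - 1) :=
        hconst (jm + 1) (by linarith) (by linarith) (jp - 1) (by linarith) (by linarith)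
      have hAdist : wordDist SA (c jm) (c jp) ≤ 2 * (L + e) := by
        calc wordDist SA (c jm) (c jp)
            ≤ wordDist SA (c jm) (c (jm + 1)) + wordDist SA (c (jm + 1)) (c jp) :=
              wordDist_triangle hgA _ _ _
          _ ≤ (L + e) + (L + e) := by
              have : wordDist SA (c (jm + 1)) (c jp) ≤ L + e := by
                rw [hmidc]
                exact h2
              linarith
          _ = 2 * (L + e) := by ring
      have hthrough : wordDist (fpGens SA SB) (η' jm) (η' jp) ≤ θ + 2 * (L + e) + θ := by
        have := dist_le_through_gates hgA hgB (η' jm) (η' jp)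
        rw [hdep] at hjm3 hjp3
        calc wordDist (fpGens SA SB) (η' jm) (η' jp)
            ≤ depth SA SB (η' jm) + wordDist SA (projA (η' jm)) (projA (η' jp)) +
              depth SA SB (η' jp) := this
          _ ≤ θ + 2 * (L + e) + θ := by
              have hAc : wordDist SA (projA (η' jm)) (projA (η' jp)) ≤ 2 * (L + e) := hAdist
              linarith
      have hlow := (hQG jm (hIcc jm le_rfl (by linarith)) jp (hIcc jp (by linarith) le_rfl)).1
      have habs3 : |(jm : ℝ) - (jp : ℝ)| = (jp : ℝ) - jm := by
        rw [abs_sub_comm, abs_of_nonneg]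
        have : (jm : ℝ) < jp := by exact_mod_cast lt_trans hjmi hijp
        linarith
      rw [habs3] at hlow
      have hchain : (1 / L) * ((jp : ℝ) - jm) - e ≤ 3 * (L + e) + θ - θ := by
        rw [hθ]
        rw [hθ] at hthrough
        linarith
      have : (1 / L) * ((jp : ℝ) - jm) ≤ 3 * L + 4 * e := by linarith
      calc (jp : ℝ) - jm = L * ((1 / L) * ((jp : ℝ) - jm)) := by
            field_simp
        _ ≤ L * (3 * L + 4 * e) := by
            apply mul_le_mul_of_nonneg_left this (le_of_lt hL0)
    -- conclude
    have hlipd : dep i ≤ dep jm + wordDist (fpGens SA SB) (η' jm) (η' i) := by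
      rw [hdep]
      exact depth_lipschitz hgA hgB (η' i) (η' jm)
    have hq := (hQG jm (hIcc jm le_rfl (by linarith)) i (hIcc i (by linarith) (by linarith))).2
    have habs4 : |(jm : ℝ) - (i : ℝ)| = (i : ℝ) - jm := by
      rw [abs_sub_comm, abs_of_nonneg]
      have : (jm : ℝ) < i := by exact_mod_cast hjmi
      linarith
    rw [habs4] at hq
    have hile : (i : ℝ) - jm ≤ (jp : ℝ) - jm := by
      have : (i : ℝ) < jp := by exact_mod_cast hijp
      linarith
    have : L * ((i : ℝ) - jm) ≤ L * (L * (3 * L + 4 * e)) := by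
      apply mul_le_mul_of_nonneg_left _ (le_of_lt hL0)
      linarith
    rw [Dg, ← hθ]
    rw [hdep] at hjm3
    rw [hdep] at hlipd ⊢
    linarith
  -- Step 2: the projected path is a quasi-geodesic in `A`.
  have hQGc : IsQGOnD (wordDist SA) L (e + 2 * Dg L e) c (Icc a b) := by
    intro p hp q hq
    constructor
    · have hlow := (hQG p hp q hq).1
      have hthrough := dist_le_through_gates hgA hgB (η' p) (η' q)
      have hdp := hdep_bound p hp
      have hdq := hdep_bound q hq
      rw [hdep] at hdp hdq
      simp only [hc]
      linarith
    · have hup := (hQG p hp q hq).2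
      have hlip := projA_lipschitz hgA hgB (η' p) (η' q)
      simp only [hc]
      linarith
  have hend_a' : c a ∈ η '' s := ⟨a₀, ha₀s, hca.symm⟩
  have hend_b' : c b ∈ η '' s := ⟨b₀, hb₀s, hcb.symm⟩
  obtain ⟨j, hjs, hjd⟩ := hMorse L (e + 2 * Dg L e) hL (by linarith) c a b hab hQGc
    hend_a' hend_b' i₀ hi₀
  refine ⟨j, hjs, ?_⟩
  calc wordDist (fpGens SA SB) (η' i₀) (Monoid.Coprod.inl (η j))
      ≤ wordDist (fpGens SA SB) (η' i₀) (Monoid.Coprod.inl (c i₀)) +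
        wordDist (fpGens SA SB) (Monoid.Coprod.inl (c i₀)) (Monoid.Coprod.inl (η j)) :=
        wordDist_triangle hgFP _ _ _
    _ ≤ dep i₀ + wordDist SA (c i₀) (η j) := by
        have h1 : wordDist (fpGens SA SB) (η' i₀) (Monoid.Coprod.inl (c i₀)) = dep i₀ := by
          simp only [hdep, hc, depth]
        have h2 := dist_inl_le (SB := SB) hgA (c i₀) (η j)
        linarith
    _ ≤ Dg L e + M L (e + 2 * Dg L e) := add_le_add (hdep_bound i₀ hi₀) hjd
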